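/- Define for u ≥ 0 the function H₀(u) = (c₀ + 1 − π/cosh(πu) + 2Re(Ψ(5/2 − iu)))·(u² + 1/4)(u² + 9/4) + (u² + 1/4)² + 2, where c₀ = −5/2 + 2γ − 2 ln 2. Then H₀(u) > 0 for all u ≥ 0. -/

import Mathlib

open Complex Real

/-- The digamma function `Ψ(z) = Γ'(z)/Γ(z)`. -/
noncomputable def digammaC (z : ℂ) : ℂ := deriv Complex.Gamma z / Complex.Gamma z

open Filter Set Topology

local notation "γ" => Real.eulerMascheroniConstant

/-- Terms of the digamma series. -/
noncomputable def dterm (z : ℂ) (n : ℕ) : ℂ := ((n : ℂ) + 1)⁻¹ - ((n : ℂ) + z)⁻¹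

/-- The digamma function as a series. -/
noncomputable def dser (z : ℂ) : ℂ := -(γ : ℂ) + ∑' n, dterm z n

lemma add_ne_zero_of_re_pos {z : ℂ} (hz : 0 < z.re) (n : ℕ) : (n : ℂ) + z ≠ 0 := by
  intro h
  have := congrArg Complex.re h
  simp only [Complex.add_re, Complex.natCast_re, Complex.zero_re] at this
  have hn : (0:ℝ) ≤ (n:ℝ) := Nat.cast_nonneg n
  linarith

lemma natCast_add_one_ne_zero (n : ℕ) : ((n : ℂ) + 1) ≠ 0 := by
  have : ((n : ℂ) + 1) = ((n + 1 : ℕ) : ℂ) := by push_cast; ring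
  rw [this]
  exact Nat.cast_ne_zero.mpr (Nat.succ_ne_zero n)

lemma dterm_eq {z : ℂ} (hz : 0 < z.re) (n : ℕ) :
    dterm z n = (z - 1) * (((n:ℂ) + 1)⁻¹ * ((n:ℂ) + z)⁻¹) := by
  have h1 := natCast_add_one_ne_zero n
  have h2 := add_ne_zero_of_re_pos hz n
  simp only [dterm]
  field_simp
  ring

lemma norm_inv_add_le {z : ℂ} (hz : 0 < z.re) (n : ℕ) :
    ‖((n:ℂ) + z)⁻¹‖ ≤ ((n:ℝ) + z.re)⁻¹ := by
  have hre : (0:ℝ) < (n:ℝ) + z.re := by positivity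
  rw [norm_inv]
  apply inv_anti₀ hre
  calc (n:ℝ) + z.re = ((n:ℂ) + z).re := by simp
    _ ≤ ‖(n:ℂ) + z‖ := Complex.re_le_norm _

lemma dterm_norm_le {z : ℂ} {ε M : ℝ} (hε : 0 < ε) (hε1 : ε ≤ 1) (hre : ε ≤ z.re)
    (hM : ‖z - 1‖ ≤ M) (n : ℕ) :
    ‖dterm z n‖ ≤ M / ε * (((n:ℝ) + 1)^2)⁻¹ := by
  have hz : 0 < z.re := lt_of_lt_of_le hε hre
  have hn1 : (0:ℝ) < (n:ℝ) + 1 := by positivity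
  rw [dterm_eq hz, norm_mul, norm_mul]
  have h2 : ‖((n:ℂ) + z)⁻¹‖ ≤ (ε * ((n:ℝ) + 1))⁻¹ := by
    refine (norm_inv_add_le hz n).trans ?_
    apply inv_anti₀ (by positivity)
    nlinarith [Nat.cast_nonneg (α := ℝ) n]
  have h1 : ‖((n:ℂ) + 1)⁻¹‖ = ((n:ℝ) + 1)⁻¹ := by
    rw [norm_inv]
    congr 1
    calc ‖(n:ℂ) + 1‖ = ‖((n + 1 : ℕ) : ℂ)‖ := by norm_cast
      _ = ((n:ℝ) + 1) := by rw [Complex.norm_natCast]; push_cast; ring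
  rw [h1]
  have hM0 : 0 ≤ M := le_trans (norm_nonneg _) hM
  calc ‖z - 1‖ * (((n:ℝ) + 1)⁻¹ * ‖((n:ℂ) + z)⁻¹‖)
      ≤ M * (((n:ℝ) + 1)⁻¹ * (ε * ((n:ℝ) + 1))⁻¹) := by
        apply mul_le_mul hM _ (by positivity) hM0
        exact mul_le_mul_of_nonneg_left h2 (by positivity)
  
    _ = M / ε * (((n:ℝ) + 1)^2)⁻¹ := by
        rw [mul_inv, sq, mul_inv, div_eq_mul_inv]
        ring
  
lemma summable_sq_inv : Summable (fun n : ℕ => (((n:ℝ) + 1)^2)⁻¹) := by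
  have := Real.summable_one_div_nat_pow.mpr (le_refl 2)
  have h2 := (summable_nat_add_iff 1).mpr this
  simpa [one_div] using h2.congr (fun n => by push_cast; norm_num)

lemma summable_dterm {z : ℂ} (hz : 0 < z.re) : Summable (dterm z) := by
  set ε := min z.re 1 with hεdef
  have hε : 0 < ε := lt_min hz one_pos
  refine Summable.of_norm_bounded ((summable_sq_inv).mul_left (‖z - 1‖ / ε)) ?_
  intro n
  exact dterm_norm_le hε (min_le_right _ _) (min_le_left _ _) le_rfl n

/-- The right half plane. -/
def RHP : Set ℂ := {z | 0 < z.re}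

lemma isOpen_RHP : IsOpen RHP := isOpen_lt continuous_const Complex.continuous_re

lemma isPreconnected_RHP : IsPreconnected RHP :=
  (convex_halfSpace_re_gt 0).isPreconnected

lemma mem_RHP_of_ball {z₀ z : ℂ} (h0 : 0 < z₀.re) (hz : z ∈ Metric.ball z₀ (z₀.re / 2)) :
    z₀.re / 2 ≤ z.re := by
  have h1 : |(z - z₀).re| ≤ ‖z - z₀‖ := Complex.abs_re_le_norm _
  have h2 : ‖z - z₀‖ < z₀.re / 2 := by
    rw [Metric.mem_ball, dist_eq_norm] at hz; exact hz
  have := abs_le.mp h1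
  simp only [Complex.sub_re] at this
  linarith [this.1]

lemma analyticAt_dser {z₀ : ℂ} (hz : 0 < z₀.re) : AnalyticAt ℂ dser z₀ := by
  set r : ℝ := z₀.re / 2 with hr
  have hrpos : 0 < r := by positivity
  set ε : ℝ := min r 1 with hε
  have hεpos : 0 < ε := lt_min hrpos one_pos
  set M : ℝ := ‖z₀ - 1‖ + r with hM
  have hsum : DifferentiableOn ℂ (fun w => ∑' n, dterm w n) (Metric.ball z₀ r) := by
    refine differentiableOn_tsum_of_summable_norm
      (summable_sq_inv.mul_left (M / ε)) ?_ Metric.isOpen_ball ?_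
    · intro n
      apply DifferentiableOn.sub (differentiableOn_const _)
      apply DifferentiableOn.inv
      · exact (differentiableOn_const _).add differentiableOn_id
      · intro w hw
        exact add_ne_zero_of_re_pos (lt_of_lt_of_le hrpos (mem_RHP_of_ball hz hw)) n
    · intro n w hw
      refine dterm_norm_le hεpos (min_le_right _ _)
        (le_trans (min_le_left _ _) (mem_RHP_of_ball hz hw)) ?_ n
      have : ‖w - 1‖ ≤ ‖z₀ - 1‖ + ‖w - z₀‖ := by
        calc ‖w - 1‖ = ‖(z₀ - 1) + (w - z₀)‖ := by ring_nf
          _ ≤ ‖z₀ - 1‖ + ‖w - z₀‖ := norm_add_le _ _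
      have h2 : ‖w - z₀‖ < r := by rw [Metric.mem_ball, dist_eq_norm] at hw; exact hw
      linarith
  have : DifferentiableOn ℂ dser (Metric.ball z₀ r) := by
    unfold dser
    exact (hsum.const_add _)
  exact (this.analyticOnNhd Metric.isOpen_ball) z₀ (Metric.mem_ball_self hrpos)

lemma analyticOnNhd_Gamma_RHP : AnalyticOnNhd ℂ Complex.Gamma RHP := by
  apply DifferentiableOn.analyticOnNhd _ isOpen_RHP
  intro z hz
  refine (Complex.differentiableAt_Gamma z ?_).differentiableWithinAt
  intro m h
  have : z.re = -(m:ℝ) := by rw [h]; simp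
  have hm : (0:ℝ) ≤ (m:ℝ) := Nat.cast_nonneg m
  have := hz
  simp only [RHP, Set.mem_setOf_eq] at this
  linarith [this]

lemma analyticOnNhd_digammaC : AnalyticOnNhd ℂ digammaC RHP := by
  intro z hz
  exact (analyticOnNhd_Gamma_RHP.deriv z hz).div (analyticOnNhd_Gamma_RHP z hz)
    (Complex.Gamma_ne_zero_of_re_pos hz)

lemma hasSum_telescope {z : ℂ} (hz : 0 < z.re) :
    HasSum (fun n : ℕ => ((n:ℂ) + z)⁻¹ - ((n:ℂ) + 1 + z)⁻¹) z⁻¹ := by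
  have hz1 : 0 < (z + 1).re := by simp; linarith
  have hsummable : Summable (fun n : ℕ => ((n:ℂ) + z)⁻¹ - ((n:ℂ) + 1 + z)⁻¹) := by
    have := (summable_dterm hz1).sub (summable_dterm hz)
    refine this.congr (fun n => ?_)
    simp only [dterm]
    ring_nf
  rw [Summable.hasSum_iff_tendsto_nat hsummable]
  have hps : ∀ N : ℕ, ∑ n ∈ Finset.range N, (((n:ℂ) + z)⁻¹ - ((n:ℂ) + 1 + z)⁻¹)
      = z⁻¹ - ((N:ℂ) + z)⁻¹ := by
    intro N
    have h0 := Finset.sum_range_sub' (f := fun n : ℕ => ((n:ℂ) + z)⁻¹) N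
    simp only [Nat.cast_zero, zero_add] at h0
    rw [← h0]
    apply Finset.sum_congr rfl
    intro i _
    push_cast
    ring_nf
  simp only [hps]
  have htend : Tendsto (fun N : ℕ => ((N:ℂ) + z)⁻¹) atTop (𝓝 0) := by
    rw [tendsto_zero_iff_norm_tendsto_zero]
    apply squeeze_zero (fun n => norm_nonneg _) (g := fun N : ℕ => ((N:ℝ) + z.re)⁻¹)
    · intro n
      have hre : (0:ℝ) < (n:ℝ) + z.re := by positivity
      rw [norm_inv]
      apply inv_anti₀ hre
      calc (n:ℝ) + z.re = ((n:ℂ) + z).re := by simp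
        _ ≤ ‖(n:ℂ) + z‖ := Complex.re_le_norm _
    · exact tendsto_inv_atTop_zero.comp
        (tendsto_atTop_add_const_right _ _ tendsto_natCast_atTop_atTop)
  simpa using (tendsto_const_nhds.sub htend)

lemma dser_rec {z : ℂ} (hz : 0 < z.re) : dser (z + 1) = dser z + z⁻¹ := by
  have hz1 : 0 < (z + 1).re := by simp; linarith
  have key : ∑' n, dterm (z+1) n = ∑' n, (dterm z n + (((n:ℂ) + z)⁻¹ - ((n:ℂ) + 1 + z)⁻¹)) := by
    apply tsum_congr
    intro n
    simp only [dterm]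
    ring_nf
  rw [dser, dser, key, Summable.tsum_add (summable_dterm hz) (hasSum_telescope hz).summable,
    (hasSum_telescope hz).tsum_eq]
  ring

lemma digammaC_rec {z : ℂ} (hz : 0 < z.re) :
    digammaC (z + 1) = digammaC z + z⁻¹ := by
  simp only [digammaC]
  have hz0 : z ≠ 0 := by
    intro h; rw [h] at hz; simp at hz
  have hznot : ∀ m : ℕ, z ≠ -m := by
    intro m h
    have : z.re = -(m:ℝ) := by rw [h]; simp
    have hm : (0:ℝ) ≤ (m:ℝ) := Nat.cast_nonneg m
    linarith
  have hz1not : ∀ m : ℕ, z + 1 ≠ -m := by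
    intro m h
    have : (z+1).re = -(m:ℝ) := by rw [h]; simp
    have hm : (0:ℝ) ≤ (m:ℝ) := Nat.cast_nonneg m
    simp only [Complex.add_re, Complex.one_re] at this
    linarith
  have hG : DifferentiableAt ℂ Complex.Gamma z := Complex.differentiableAt_Gamma z hznot
  have hG1 : DifferentiableAt ℂ Complex.Gamma (z + 1) := Complex.differentiableAt_Gamma _ hz1not
  have e : (fun w : ℂ => w * Complex.Gamma w) =ᶠ[𝓝 z] (fun w => Complex.Gamma (w + 1)) := by
    filter_upwards [eventually_ne_nhds hz0] with w hw
    exact (Complex.Gamma_add_one w hw).symm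
  have d1 : HasDerivAt (fun w : ℂ => Complex.Gamma (w + 1)) (deriv Complex.Gamma (z + 1)) z := by
    have := hG1.hasDerivAt.comp z ((hasDerivAt_id z).add_const 1)
    exact this.congr_deriv (by simp)
  have d2 : HasDerivAt (fun w : ℂ => w * Complex.Gamma w)
      (Complex.Gamma z + z * deriv Complex.Gamma z) z := by
    have := (hasDerivAt_id z).mul hG.hasDerivAt
    exact this.congr_deriv (by simp)
  have d1' : HasDerivAt (fun w : ℂ => w * Complex.Gamma w) (deriv Complex.Gamma (z + 1)) z :=
    d1.congr_of_eventuallyEq e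
  have hkey : deriv Complex.Gamma (z + 1) = Complex.Gamma z + z * deriv Complex.Gamma z :=
    d1'.unique d2
  have hΓz : Complex.Gamma z ≠ 0 := Complex.Gamma_ne_zero hznot
  rw [hkey, Complex.Gamma_add_one z hz0]
  field_simp
  ring

noncomputable def rterm (x : ℝ) (n : ℕ) : ℝ := ((n : ℝ) + 1)⁻¹ - ((n : ℝ) + x)⁻¹
noncomputable def rser (x : ℝ) : ℝ := -γ + ∑' n, rterm x n
noncomputable def psiR (x : ℝ) : ℝ := deriv Real.Gamma x / Real.Gamma x

lemma dterm_ofReal (x : ℝ) (n : ℕ) : dterm (x : ℂ) n = ((rterm x n : ℝ) : ℂ) := by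
  simp only [dterm, rterm]
  push_cast
  ring

lemma summable_rterm {x : ℝ} (hx : 0 < x) : Summable (rterm x) := by
  have h : Summable (fun n => ((rterm x n : ℝ) : ℂ)) := by
    refine (summable_dterm (z := (x:ℂ)) (by simpa using hx)).congr (fun n => dterm_ofReal x n)
  exact Complex.summable_ofReal.mp h

lemma dser_ofReal {x : ℝ} (hx : 0 < x) : dser (x : ℂ) = ((rser x : ℝ) : ℂ) := by
  rw [dser, rser]
  push_cast
  congr 1
  exact tsum_congr (fun n => dterm_ofReal x n)

lemma not_nat_neg {x : ℝ} (hx : 0 < x) : ∀ m : ℕ, x ≠ -m := by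
  intro m h
  have : (0:ℝ) ≤ (m:ℝ) := Nat.cast_nonneg m
  linarith [h ▸ hx]

lemma deriv_Gamma_ofReal {x : ℝ} (hx : 0 < x) :
    deriv Complex.Gamma (x : ℂ) = ((deriv Real.Gamma x : ℝ) : ℂ) := by
  have hnotR := not_nat_neg hx
  have hnotC : ∀ m : ℕ, (x:ℂ) ≠ -m := by
    intro m h
    exact hnotR m (by exact_mod_cast h)
  have hR : HasDerivAt Real.Gamma (deriv Real.Gamma x) x :=
    (Real.differentiableAt_Gamma hnotR).hasDerivAt
  have hC : HasDerivAt Complex.Gamma (deriv Complex.Gamma (x:ℂ)) (x:ℂ) :=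
    (Complex.differentiableAt_Gamma _ hnotC).hasDerivAt
  have h1 : HasDerivAt (fun t : ℝ => Complex.Gamma (t : ℂ)) (deriv Complex.Gamma (x:ℂ)) x :=
    hC.comp_ofReal
  have h2 : HasDerivAt (fun t : ℝ => ((Real.Gamma t : ℝ) : ℂ)) ((deriv Real.Gamma x : ℝ) : ℂ) x :=
    hR.ofReal_comp
  have heq : (fun t : ℝ => Complex.Gamma (t : ℂ)) = (fun t : ℝ => ((Real.Gamma t : ℝ) : ℂ)) :=
    funext (fun t => Complex.Gamma_ofReal t)
  rw [heq] at h1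
  exact h1.unique h2

lemma digammaC_ofReal {x : ℝ} (hx : 0 < x) : digammaC (x : ℂ) = ((psiR x : ℝ) : ℂ) := by
  rw [digammaC, psiR, deriv_Gamma_ofReal hx, Complex.Gamma_ofReal, Complex.ofReal_div]

lemma rser_rec {x : ℝ} (hx : 0 < x) : rser (x + 1) = rser x + x⁻¹ := by
  have h := dser_rec (z := (x:ℂ)) (by simpa using hx)
  rw [show ((x:ℂ) + 1) = ((x + 1 : ℝ) : ℂ) by push_cast; ring] at h
  rw [dser_ofReal (by linarith), dser_ofReal hx] at h
  have : ((rser (x+1) : ℝ) : ℂ) = ((rser x + x⁻¹ : ℝ) : ℂ) := by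
    rw [h]; push_cast; ring
  exact_mod_cast this

lemma psiR_rec {x : ℝ} (hx : 0 < x) : psiR (x + 1) = psiR x + x⁻¹ := by
  have h := digammaC_rec (z := (x:ℂ)) (by simpa using hx)
  rw [show ((x:ℂ) + 1) = ((x + 1 : ℝ) : ℂ) by push_cast; ring] at h
  rw [digammaC_ofReal (by linarith), digammaC_ofReal hx] at h
  have : ((psiR (x+1) : ℝ) : ℂ) = ((psiR x + x⁻¹ : ℝ) : ℂ) := by
    rw [h]; push_cast; ring
  exact_mod_cast this

lemma rser_mono : MonotoneOn rser (Ioi (0:ℝ)) := by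
  intro x hx y hy hxy
  simp only [mem_Ioi] at hx hy
  rw [rser, rser]
  have key : ∑' n, rterm x n ≤ ∑' n, rterm y n := by
    refine Summable.tsum_le_tsum (fun n => ?_) (summable_rterm hx) (summable_rterm hy)
    have h1 : (0:ℝ) < (n:ℝ) + x := by positivity
    have h2 : ((n:ℝ) + y)⁻¹ ≤ ((n:ℝ) + x)⁻¹ := by
      apply inv_anti₀ h1
      linarith
    simp only [rterm]
    linarith
  linarith

lemma psiR_mono : MonotoneOn psiR (Ioi (0:ℝ)) := by
  have hdiff : ∀ x ∈ Ioi (0:ℝ), DifferentiableAt ℝ (fun t => Real.log (Real.Gamma t)) x := by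
    intro x hx
    exact (Real.differentiableAt_Gamma (not_nat_neg hx)).log (Real.Gamma_pos_of_pos hx).ne'
  have hmono := Real.convexOn_log_Gamma.monotoneOn_deriv (by
    intro x hx
    simpa [Function.comp_def] using hdiff x hx)
  intro x hx y hy hxy
  have ex : deriv (Real.log ∘ Real.Gamma) x = psiR x := by
    rw [Function.comp_def, _root_.deriv.log (Real.differentiableAt_Gamma (not_nat_neg hx))
      (Real.Gamma_pos_of_pos hx).ne']
    rfl
  have ey : deriv (Real.log ∘ Real.Gamma) y = psiR y := by
    rw [Function.comp_def, _root_.deriv.log (Real.differentiableAt_Gamma (not_nat_neg hy))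
      (Real.Gamma_pos_of_pos hy).ne']
    rfl
  rw [← ex, ← ey]
  exact hmono hx hy hxy

lemma rser_one : rser 1 = -γ := by
  have : ∀ n : ℕ, rterm 1 n = 0 := by
    intro n; simp [rterm]
  simp [rser, this, tsum_zero]

lemma rser_nat (n : ℕ) : rser ((n : ℝ) + 1) = -γ + ((harmonic n : ℚ) : ℝ) := by
  induction n with
  | zero => simpa using rser_one
  | succ m ih =>
    have h1 : ((m + 1 : ℕ) : ℝ) + 1 = ((m:ℝ) + 1) + 1 := by push_cast; ring
    rw [h1, rser_rec (by positivity), ih, harmonic_succ]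
    push_cast
    ring

lemma psiR_nat (n : ℕ) : psiR ((n : ℝ) + 1) = -γ + ((harmonic n : ℚ) : ℝ) := by
  rw [psiR, Real.deriv_Gamma_nat n, Real.Gamma_nat_eq_factorial]
  have h : (Nat.factorial n : ℝ) ≠ 0 := by exact_mod_cast Nat.factorial_ne_zero n
  field_simp

lemma shift_diff {x : ℝ} (hx : 0 < x) (k : ℕ) :
    psiR (x + k) - rser (x + k) = psiR x - rser x := by
  induction k with
  | zero => simp
  | succ m ih =>
    have hxm : 0 < x + m := by positivity
    have h1 : x + ((m + 1 : ℕ) : ℝ) = (x + m) + 1 := by push_cast; ring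
    rw [h1, psiR_rec hxm, rser_rec hxm]
    simpa using ih

lemma diff_bound {x : ℝ} (hx : 0 < x) (hx1 : x ≤ 1) (m : ℕ) :
    |psiR x - rser x| ≤ ((m:ℝ) + 1)⁻¹ := by
  have key := shift_diff hx (m + 1)
  set y := x + ((m + 1 : ℕ) : ℝ) with hy
  have hy1 : (m:ℝ) + 1 ≤ y := by simp [hy]; push_cast; linarith
  have hy2 : y ≤ (m:ℝ) + 2 := by simp [hy]; push_cast; linarith
  have hyp : (0:ℝ) < y := by linarith [Nat.cast_nonneg (α := ℝ) m]
  have hm1 : ((m:ℝ) + 1) ∈ Ioi (0:ℝ) := by simp; positivity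
  have hm2 : ((m:ℝ) + 2) ∈ Ioi (0:ℝ) := by simp; positivity
  have hyI : y ∈ Ioi (0:ℝ) := hyp
  have hp1 : psiR y ≤ psiR ((m:ℝ) + 2) := psiR_mono hyI hm2 hy2
  have hp2 : psiR ((m:ℝ) + 1) ≤ psiR y := psiR_mono hm1 hyI hy1
  have hr1 : rser y ≤ rser ((m:ℝ) + 2) := rser_mono hyI hm2 hy2
  have hr2 : rser ((m:ℝ) + 1) ≤ rser y := rser_mono hm1 hyI hy1
  have e1 : psiR ((m:ℝ) + 1) = -γ + ((harmonic m : ℚ) : ℝ) := psiR_nat m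
  have e2 : rser ((m:ℝ) + 1) = -γ + ((harmonic m : ℚ) : ℝ) := rser_nat m
  have e3 : psiR ((m:ℝ) + 2) = -γ + ((harmonic (m+1) : ℚ) : ℝ) := by
    have := psiR_nat (m + 1)
    rw [show (((m+1 : ℕ)):ℝ) + 1 = (m:ℝ) + 2 by push_cast; ring] at this
    exact this
  have e4 : rser ((m:ℝ) + 2) = -γ + ((harmonic (m+1) : ℚ) : ℝ) := by
    have := rser_nat (m + 1)
    rw [show (((m+1 : ℕ)):ℝ) + 1 = (m:ℝ) + 2 by push_cast; ring] at this
    exact this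
  have hh : ((harmonic (m+1) : ℚ) : ℝ) = ((harmonic m : ℚ) : ℝ) + ((m:ℝ) + 1)⁻¹ := by
    rw [harmonic_succ m]
    push_cast
    ring
  rw [← key]
  rw [abs_le]
  constructor <;> [nlinarith [hp2, hr1, e1, e4, hh]; nlinarith [hp1, hr2, e2, e3, hh]]

lemma psiR_eq_rser {x : ℝ} (hx : 0 < x) (hx1 : x ≤ 1) : psiR x = rser x := by
  by_contra h
  have habs : 0 < |psiR x - rser x| := abs_pos.mpr (sub_ne_zero.mpr h)
  obtain ⟨n, hn⟩ := exists_nat_one_div_lt habs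
  have := diff_bound hx hx1 n
  rw [one_div] at hn
  linarith

lemma digammaC_eq_dser : EqOn digammaC dser RHP := by
  apply AnalyticOnNhd.eqOn_of_preconnected_of_frequently_eq analyticOnNhd_digammaC
    (fun z hz => analyticAt_dser hz) isPreconnected_RHP (z₀ := 1)
    (by simp [RHP])
  -- frequently equal near 1
  set u : ℕ → ℂ := fun j => ((1 - ((j:ℝ) + 2)⁻¹ : ℝ) : ℂ) with hu
  have hx : ∀ j : ℕ, 0 < 1 - ((j:ℝ) + 2)⁻¹ ∧ 1 - ((j:ℝ) + 2)⁻¹ ≤ 1 := by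
    intro j
    have h2 : (0:ℝ) < (j:ℝ) + 2 := by positivity
    have h3 : ((j:ℝ) + 2)⁻¹ ≤ 2⁻¹ := by
      apply inv_anti₀ (by norm_num)
      linarith [Nat.cast_nonneg (α := ℝ) j]
    have h4 : 0 < ((j:ℝ) + 2)⁻¹ := by positivity
    constructor <;> linarith
  have htend : Tendsto u atTop (𝓝[≠] (1:ℂ)) := by
    apply tendsto_nhdsWithin_of_tendsto_nhds_of_eventually_within
    · have hreal : Tendsto (fun j : ℕ => 1 - ((j:ℝ) + 2)⁻¹) atTop (𝓝 1) := by
        have h0 : Tendsto (fun j : ℕ => ((j:ℝ) + 2)⁻¹) atTop (𝓝 0) :=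
          tendsto_inv_atTop_zero.comp
            (tendsto_atTop_add_const_right _ _ tendsto_natCast_atTop_atTop)
        simpa using tendsto_const_nhds.sub h0
      have := (Complex.continuous_ofReal.tendsto 1).comp hreal
      simpa only [hu, Complex.ofReal_one, Function.comp_def] using this
    · apply Eventually.of_forall
      intro j
      simp only [hu, Set.mem_compl_iff, Set.mem_singleton_iff]
      intro hcontra
      have : (1 - ((j:ℝ) + 2)⁻¹ : ℝ) = 1 := by exact_mod_cast hcontra
      have h4 : (0:ℝ) < ((j:ℝ) + 2)⁻¹ := by positivity
      linarith
  apply htend.frequently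
  apply Eventually.frequently
  apply Eventually.of_forall
  intro j
  have hj := hx j
  rw [hu]
  simp only
  rw [digammaC_ofReal hj.1, dser_ofReal hj.1, psiR_eq_rser hj.1 hj.2]

lemma digammaC_one_half : digammaC (1/2 : ℂ) = ((-(γ + 2 * Real.log 2) : ℝ) : ℂ) := by
  have hd := Complex.hasDerivAt_Gamma_one_half.deriv
  have hg : Complex.Gamma (1/2 : ℂ) = ((Real.sqrt Real.pi : ℝ) : ℂ) := by
    rw [show (1/2 : ℂ) = (((1/2:ℝ)):ℂ) by norm_num, Complex.Gamma_ofReal,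
      Real.Gamma_one_half_eq]
  have hlog : Complex.log 2 = ((Real.log 2 : ℝ) : ℂ) := by
    rw [show (2:ℂ) = (((2:ℝ)):ℂ) by norm_num, ← Complex.ofReal_log (by norm_num)]
  have hπ : ((Real.sqrt Real.pi : ℝ) : ℂ) ≠ 0 := by
    rw [Complex.ofReal_ne_zero]
    positivity
  rw [digammaC, hd, hg, hlog]
  field_simp
  push_cast
  ring

lemma digammaC_five_half : digammaC (5/2 : ℂ) = ((-γ - 2 * Real.log 2 + 8/3 : ℝ) : ℂ) := by
  have h1 : digammaC ((1/2 : ℂ) + 1) = digammaC (1/2 : ℂ) + (1/2 : ℂ)⁻¹ :=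
    digammaC_rec (by norm_num)
  have h2 : digammaC ((3/2 : ℂ) + 1) = digammaC (3/2 : ℂ) + (3/2 : ℂ)⁻¹ :=
    digammaC_rec (by norm_num)
  have e1 : ((1/2 : ℂ) + 1) = (3/2 : ℂ) := by norm_num
  have e2 : ((3/2 : ℂ) + 1) = (5/2 : ℂ) := by norm_num
  rw [e1] at h1
  rw [e2] at h2
  rw [h2, h1, digammaC_one_half]
  push_cast
  ring

lemma dterm_re_eq (u : ℝ) (n : ℕ) :
    (dterm ((5/2 : ℂ) - u * I) n).re
      = ((n:ℝ) + 1)⁻¹ - ((n:ℝ) + 5/2) / (((n:ℝ) + 5/2)^2 + u^2) := by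
  have e1 : (((n:ℂ) + ((5/2 : ℂ) - u * I))⁻¹).re
      = ((n:ℝ) + 5/2) / (((n:ℝ) + 5/2)^2 + u^2) := by
    have hre : ((n:ℂ) + ((5/2 : ℂ) - u * I)).re = (n:ℝ) + 5/2 := by simp
    have him : ((n:ℂ) + ((5/2 : ℂ) - u * I)).im = -u := by simp
    rw [Complex.inv_re, Complex.normSq_apply, hre, him]
    ring_nf
  have e2 : (((n:ℂ) + 1)⁻¹).re = ((n:ℝ) + 1)⁻¹ := by
    have h : ((n:ℂ) + 1) = Complex.ofReal ((n:ℝ) + 1) := by push_cast; ring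
    rw [h, ← Complex.ofReal_inv, Complex.ofReal_re]
  rw [dterm, Complex.sub_re, e1, e2]

lemma summable_dterm_re (u : ℝ) :
    Summable (fun n => (dterm ((5/2 : ℂ) - u * I) n).re) := by
  have hz : (0:ℝ) < ((5/2 : ℂ) - u * I).re := by simp
  exact ((summable_dterm hz).hasSum.mapL Complex.reCLM).summable

lemma digammaC_re_ge (u : ℝ) :
    -γ - 2 * Real.log 2 + 8/3 ≤ (digammaC ((5/2 : ℂ) - u * I)).re := by
  have hz : (0:ℝ) < ((5/2 : ℂ) - u * I).re := by simp
  have hre : (digammaC ((5/2:ℂ) - u*I)).re = -γ + ∑' n, (dterm ((5/2:ℂ) - u*I) n).re := by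
    rw [digammaC_eq_dser hz, dser, Complex.add_re, Complex.re_tsum (summable_dterm hz)]
    simp
  have hval : rser (5/2 : ℝ) = -γ - 2 * Real.log 2 + 8/3 := by
    have h1 : dser (((5/2:ℝ)):ℂ) = digammaC (((5/2:ℝ)):ℂ) :=
      (digammaC_eq_dser (by simp [RHP] : (((5/2:ℝ)):ℂ) ∈ RHP)).symm
    rw [dser_ofReal (by norm_num)] at h1
    rw [show (((5/2:ℝ)):ℂ) = (5/2:ℂ) by norm_num, digammaC_five_half] at h1
    exact_mod_cast h1
  have hterm : ∀ n, rterm (5/2:ℝ) n ≤ (dterm ((5/2:ℂ) - u*I) n).re := by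
    intro n
    rw [dterm_re_eq, rterm]
    have ha : (0:ℝ) < (n:ℝ) + 5/2 := by positivity
    have hb : ((n:ℝ)+5/2) / (((n:ℝ)+5/2)^2 + u^2) ≤ ((n:ℝ)+5/2)⁻¹ := by
      rw [inv_eq_one_div, div_le_div_iff₀ (by positivity) ha]
      nlinarith [sq_nonneg u]
    linarith
  have hsum := Summable.tsum_le_tsum hterm (summable_rterm (by norm_num)) (summable_dterm_re u)
  rw [hre]
  rw [rser] at hval
  linarith

lemma nonneg_of_hasDerivAt (f f' : ℝ → ℝ) (hf : ∀ x, HasDerivAt f (f' x) x)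
    (h0 : 0 ≤ f 0) (hd : ∀ x, 0 ≤ x → 0 ≤ f' x) {t : ℝ} (ht : 0 ≤ t) : 0 ≤ f t := by
  have hdiff : Differentiable ℝ f := fun x => (hf x).differentiableAt
  have hmono : MonotoneOn f (Set.Ici 0) := by
    apply monotoneOn_of_deriv_nonneg (convex_Ici 0) hdiff.continuous.continuousOn
      hdiff.differentiableOn
    intro x hx
    rw [interior_Ici] at hx
    rw [(hf x).deriv]
    exact hd x (le_of_lt hx)
  exact le_trans h0 (hmono (Set.self_mem_Ici) ht ht)

lemma sinh_ge_id : ∀ x : ℝ, 0 ≤ x → 0 ≤ Real.sinh x - x := by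
  intro x hx
  refine nonneg_of_hasDerivAt (fun y => Real.sinh y - y) (fun y => Real.cosh y - 1)
    (fun y => ?_) (by simp) (fun y _ => by simpa using sub_nonneg.2 (Real.one_le_cosh y)) hx
  exact (Real.hasDerivAt_sinh y).sub (hasDerivAt_id' y)

lemma cosh_ge_quad : ∀ x : ℝ, 0 ≤ x → 0 ≤ Real.cosh x - (1 + x^2/2) := by
  intro x hx
  refine nonneg_of_hasDerivAt (fun y => Real.cosh y - (1 + y^2/2))
    (fun y => Real.sinh y - y) (fun y => ?_) (by norm_num) (fun y hy => sinh_ge_id y hy) hx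
  have hpoly : HasDerivAt (fun y : ℝ => 1 + y^2/2) y y := by
    have := (hasDerivAt_pow 2 y).div_const 2
    have h2 := ((hasDerivAt_const y (1:ℝ)).add this)
    refine h2.congr_deriv ?_
    push_cast
    ring
  exact (Real.hasDerivAt_cosh y).sub hpoly

lemma sinh_ge_cubic : ∀ x : ℝ, 0 ≤ x → 0 ≤ Real.sinh x - (x + x^3/6) := by
  intro x hx
  refine nonneg_of_hasDerivAt (fun y => Real.sinh y - (y + y^3/6))
    (fun y => Real.cosh y - (1 + y^2/2)) (fun y => ?_) (by norm_num)
    (fun y hy => cosh_ge_quad y hy) hx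
  have hpoly : HasDerivAt (fun y : ℝ => y + y^3/6) (1 + y^2/2) y := by
    have := ((hasDerivAt_id' y).add ((hasDerivAt_pow 3 y).div_const 6))
    refine this.congr_deriv ?_
    push_cast
    ring
  exact (Real.hasDerivAt_sinh y).sub hpoly

lemma cosh_ge_quartic : ∀ x : ℝ, 0 ≤ x → 1 + x^2/2 + x^4/24 ≤ Real.cosh x := by
  intro x hx
  have h : 0 ≤ Real.cosh x - (1 + x^2/2 + x^4/24) := by
    refine nonneg_of_hasDerivAt (fun y => Real.cosh y - (1 + y^2/2 + y^4/24))
      (fun y => Real.sinh y - (y + y^3/6)) (fun y => ?_) (by norm_num)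
      (fun y hy => sinh_ge_cubic y hy) hx
    have hpoly : HasDerivAt (fun y : ℝ => 1 + y^2/2 + y^4/24) (y + y^3/6) y := by
      have := (((hasDerivAt_const y (1:ℝ)).add ((hasDerivAt_pow 2 y).div_const 2)).add
        ((hasDerivAt_pow 4 y).div_const 24))
      refine this.congr_deriv ?_
      push_cast
      ring
    exact (Real.hasDerivAt_cosh y).sub hpoly
  linarith

lemma quad_helper (B c x : ℝ) (hx : 1/4 ≤ x) (hq : 46/25 ≤ (1+B)*x^2 + 2*B*x + 2)
    (hc : c*(x*(x+2)) < 46/25) : 0 < (B - c)*(x*(x+2)) + x^2 + 2 := by nlinarith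

lemma quad_lb (L x : ℝ) (hL1 : (0.6931471803 : ℝ) < L) (hL2 : L < (0.6931471808 : ℝ))
    (hx : 1/4 ≤ x) :
    (46/25 : ℝ) ≤ (1 + (23/6 - 6*L))*x^2 + 2*(23/6 - 6*L)*x + 2 := by
  have h29 : (0:ℝ) ≤ 29/6 - 6*L := by linarith
  have hc1 : (0:ℝ) ≤ 37007/3000 - (4449/250)*L := by linarith
  have hx0 : (0:ℝ) ≤ x := by linarith
  nlinarith [mul_nonneg h29 (sq_nonneg (x - 483/1000)), mul_nonneg hc1 hx0]

set_option maxHeartbeats 1000000 in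
lemma main_helper (u r g L C : ℝ) (hu : 0 ≤ u) (hCpos : 0 < C)
    (hC2 : 1 + (π*u)^2/2 + (π*u)^4/24 ≤ C)
    (hL1 : (0.6931471803 : ℝ) < L) (hL2 : L < (0.6931471808 : ℝ))
    (hr : -g - 2*L + 8/3 ≤ r) :
    0 < (((-5 / 2 + 2 * g - 2 * L) + 1 - π / C + 2 * r)
        * (u ^ 2 + 1 / 4) * (u ^ 2 + 9 / 4)) + (u ^ 2 + 1 / 4) ^ 2 + 2 := by
  have hp1 : (3.141592 : ℝ) < π := Real.pi_gt_d6
  have hp2 : π < (3.141593 : ℝ) := Real.pi_lt_d6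
  set x : ℝ := u^2 + 1/4 with hxdef
  have hxq : (1/4 : ℝ) ≤ x := by nlinarith [sq_nonneg u]
  have hππ : (9.8696 : ℝ) < π * π := by nlinarith
  have hπππ : (31.006 : ℝ) < π * π * π := by nlinarith
  have key1 : π * (x * (x + 2)) < (46/25) * C := by
    have e1 : π * (9/16) < (46/25) * 1 := by nlinarith
    have e2 : π * (5/2) * u^2 ≤ 46/25 * (π*π/2) * u^2 := by nlinarith [sq_nonneg u]
    have e3 : π * (u^2*u^2) ≤ 46/25 * (π*π*π*π/24) * (u^2*u^2) := by
      nlinarith [mul_nonneg (sq_nonneg u) (sq_nonneg u)]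
    have h0 : π * (x * (x + 2)) < (46/25) * (1 + (π*u)^2/2 + (π*u)^4/24) := by
      rw [hxdef]
      nlinarith [e1, e2, e3]
    calc π * (x * (x + 2)) < (46/25) * (1 + (π*u)^2/2 + (π*u)^4/24) := h0
      _ ≤ (46/25) * C := mul_le_mul_of_nonneg_left hC2 (by norm_num)
  have hdivlt : (π / C) * (x * (x + 2)) < 46/25 := by
    rw [div_mul_eq_mul_div, div_lt_iff₀ hCpos]
    linarith [key1]
  set B : ℝ := 23/6 - 6*L with hBdef
  have key2 : (46/25 : ℝ) ≤ (1 + B)*x^2 + 2*B*x + 2 := quad_lb L x hL1 hL2 hxq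
  have hfin : 0 < (B - π/C)*(x*(x+2)) + x^2 + 2 := quad_helper B (π/C) x hxq key2 hdivlt
  set A : ℝ := (-5 / 2 + 2 * g - 2 * L) + 1 - π / C + 2 * r with hAdef
  have hA : B - π/C ≤ A := by rw [hAdef, hBdef]; linarith
  have hxx : (0:ℝ) < x * (x + 2) := by rw [hxdef]; positivity
  have hmul : (B - π/C) * (x*(x+2)) ≤ A * (x*(x+2)) :=
    mul_le_mul_of_nonneg_right hA (le_of_lt hxx)
  have heq : A * (u ^ 2 + 1 / 4) * (u ^ 2 + 9 / 4) = A * (x*(x+2)) := by rw [hxdef]; ring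
  have hx2 : (u ^ 2 + 1 / 4)^2 = x^2 := by rw [hxdef]
  rw [heq, hx2]
  clear_value x B A
  linarith


/-- With `c₀ = −5/2 + 2γ − 2 ln 2`, the function
`H₀(u) = (c₀ + 1 − π/cosh(πu) + 2Re(Ψ(5/2 − iu)))·(u² + 1/4)(u² + 9/4) + (u² + 1/4)² + 2`
is positive for all `u ≥ 0`. -/
theorem hessian_symbol_positive (u : ℝ) (hu : 0 ≤ u) :
    0 < (((-5 / 2 + 2 * Real.eulerMascheroniConstant - 2 * Real.log 2) + 1
          - π / Real.cosh (π * u) + 2 * (digammaC (5 / 2 - ↑u * I)).re)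
        * (u ^ 2 + 1 / 4) * (u ^ 2 + 9 / 4)) + (u ^ 2 + 1 / 4) ^ 2 + 2 := by
  have hr := digammaC_re_ge u
  have h5 : ((5/2 : ℂ) - u * I) = (5 / 2 - ↑u * I) := by norm_num
  rw [h5] at hr
  exact main_helper u ((digammaC (5 / 2 - ↑u * I)).re) Real.eulerMascheroniConstant
    (Real.log 2) (Real.cosh (π * u)) hu (Real.cosh_pos _)
    (cosh_ge_quartic _ (by positivity)) Real.log_two_gt_d9 Real.log_two_lt_d9 hr
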